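/- Let G be a Carnot group of homogeneous dimension M, α > 0, p > 1, q > p - 1, 0 < r < ∞, λ = 8. For any nonnegative Borel measure μ on G, ∫_G [μ(B_{λ^3 r}(x))/r^{M-αp}]^{q/(p-1)} dx ≤ C ∫_G [W_{α,p}^r μ(x)]^q dx, with C independent of r and μ. -/

import Mathlib

open MeasureTheory ENNReal Set

/-- The truncated Wolff potential
`W_{α,p}^r μ(x) = ∫_0^r [μ(B_t(x))/t^{M-αp}]^{1/(p-1)} dt/t`. -/
noncomputable def wolffPot {G : Type*} [MetricSpace G] [MeasurableSpace G]
    (μ : Measure G) (α p M r : ℝ) (x : G) : ℝ≥0∞ :=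
  ∫⁻ t in Set.Ioo (0 : ℝ) r,
    (μ (Metric.ball x t) / ENNReal.ofReal (t ^ (M - α * p))) ^ (1 / (p - 1)) *
      ENNReal.ofReal t⁻¹

open Metric in
/-- The function `x ↦ μ (ball x c)` is lower semicontinuous, hence measurable. -/
lemma aux_measurable_ball {G : Type} [MetricSpace G] [MeasurableSpace G] [BorelSpace G]
    (μ : Measure G) (c : ℝ) : Measurable fun x => μ (Metric.ball x c) := by
  refine LowerSemicontinuous.measurable ?_
  intro x ε hε
  rcases le_or_gt c 0 with hc | hc
  · exact absurd hε (by simp [Metric.ball_eq_empty.mpr hc])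
  have hU : Metric.ball x c = ⋃ n : ℕ, Metric.closedBall x (c - c / (n + 2)) := by
    ext y
    simp only [mem_ball, mem_iUnion, mem_closedBall]
    constructor
    · intro hy
      have hδ0 : 0 < c - dist y x := by linarith
      obtain ⟨n, hn⟩ := exists_nat_gt (c / (c - dist y x))
      refine ⟨n, ?_⟩
      have hn2 : c / (c - dist y x) < (n : ℝ) + 2 := by
        have : (n : ℝ) < (n : ℝ) + 2 := by linarith
        linarith
      have hlt : c < ((n : ℝ) + 2) * (c - dist y x) := by
        rw [div_lt_iff₀ hδ0] at hn2; linarith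
      have hpos : (0 : ℝ) < (n : ℝ) + 2 := by positivity
      have hkey : c / ((n : ℝ) + 2) ≤ c - dist y x := by
        rw [div_le_iff₀ hpos]
        nlinarith
      linarith
    · rintro ⟨n, hn⟩
      have : (0 : ℝ) < c / ((n : ℝ) + 2) := by positivity
      linarith
  have hmono : Monotone fun n : ℕ => Metric.closedBall x (c - c / (n + 2)) := by
    intro a b hab
    apply Metric.closedBall_subset_closedBall
    have h2 : (0 : ℝ) < (a : ℝ) + 2 := by positivity
    have h3 : ((a : ℝ) + 2) ≤ ((b : ℝ) + 2) := by
      have : (a : ℝ) ≤ b := by exact_mod_cast hab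
      linarith
    have : c / ((b : ℝ) + 2) ≤ c / ((a : ℝ) + 2) :=
      div_le_div_of_nonneg_left hc.le h2 h3
    linarith
  have hsup : ε < ⨆ n : ℕ, μ (Metric.closedBall x (c - c / (n + 2))) := by
    rw [← Directed.measure_iUnion hmono.directed_le, ← hU]
    exact hε
  obtain ⟨n, hn⟩ := lt_iSup_iff.mp hsup
  have hρc : c - c / ((n : ℝ) + 2) < c := by
    have : (0 : ℝ) < c / ((n : ℝ) + 2) := by positivity
    linarith
  filter_upwards [Metric.ball_mem_nhds x (show (0 : ℝ) < c - (c - c / ((n : ℝ) + 2)) by linarith)]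
    with y hy
  refine lt_of_lt_of_le hn (measure_mono ?_)
  intro w hw
  rw [Metric.mem_closedBall] at hw
  rw [Metric.mem_ball] at hy ⊢
  have : dist w y ≤ dist w x + dist x y := dist_triangle w x y
  have hxy : dist x y = dist y x := dist_comm x y
  linarith

open Metric in
/-- In an Ahlfors regular space, every ball has a finite `ε`-net of controlled
cardinality whose points lie in the ball. -/
lemma aux_net {G : Type} [MetricSpace G] [MeasurableSpace G] [BorelSpace G]
    (vol : Measure G) {cA : ℝ≥0∞} {M : ℝ} (hcA : 0 < cA) (hcA' : cA < ∞)
    (hvol : ∀ (x : G) (R : ℝ), 0 < R → vol (Metric.ball x R) = cA * ENNReal.ofReal (R ^ M))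
    (x : G) {R ε : ℝ} (hR : 0 < R) (hε : 0 < ε) :
    ∃ T : Finset G, ↑T ⊆ Metric.ball x R ∧
      Metric.ball x R ⊆ ⋃ y ∈ T, Metric.ball y ε ∧
      (T.card : ℝ) ≤ ((2 * R + 2 * ε) / ε) ^ M := by
  classical
  have key : ∀ T : Finset G, ↑T ⊆ Metric.ball x R →
      (∀ a ∈ T, ∀ b ∈ T, a ≠ b → ε ≤ dist a b) →
      (T.card : ℝ) ≤ ((2 * R + 2 * ε) / ε) ^ M := by
    intro T hTsub hTsep
    have hdisj : (↑T : Set G).PairwiseDisjoint fun y => Metric.ball y (ε / 2) := by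
      intro a ha b hb hab
      refine Set.disjoint_left.mpr fun z hza hzb => ?_
      rw [mem_ball] at hza hzb
      have h1 := hTsep a ha b hb hab
      have h2 : dist a b ≤ dist z a + dist z b := dist_triangle_left a b z
      linarith
    have hsum : vol (⋃ y ∈ T, Metric.ball y (ε / 2))
        = (T.card : ℝ≥0∞) * (cA * ENNReal.ofReal ((ε / 2) ^ M)) := by
      rw [measure_biUnion_finset hdisj fun b _ => measurableSet_ball]
      rw [Finset.sum_congr rfl fun b _ => hvol b (ε / 2) (by positivity)]
      rw [Finset.sum_const, nsmul_eq_mul]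
    have hsub2 : (⋃ y ∈ T, Metric.ball y (ε / 2)) ⊆ Metric.ball x (R + ε) := by
      intro z hz
      simp only [mem_iUnion, exists_prop] at hz
      obtain ⟨y, hyT, hzy⟩ := hz
      have h1 := hTsub hyT
      rw [mem_ball] at h1 hzy ⊢
      have : dist z x ≤ dist z y + dist y x := dist_triangle z y x
      linarith
    have hle : (T.card : ℝ≥0∞) * (cA * ENNReal.ofReal ((ε / 2) ^ M))
        ≤ cA * ENNReal.ofReal ((R + ε) ^ M) := by
      rw [← hsum, ← hvol x (R + ε) (by positivity)]
      exact measure_mono hsub2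
    have hq0 : cA * ENNReal.ofReal ((ε / 2) ^ M) ≠ 0 := by
      refine mul_ne_zero hcA.ne' ?_
      exact (ENNReal.ofReal_pos.mpr (Real.rpow_pos_of_pos (by positivity) M)).ne'
    have hqt : cA * ENNReal.ofReal ((ε / 2) ^ M) ≠ ∞ :=
      ENNReal.mul_ne_top hcA'.ne ENNReal.ofReal_ne_top
    have hcard : (T.card : ℝ≥0∞)
        ≤ cA * ENNReal.ofReal ((R + ε) ^ M) / (cA * ENNReal.ofReal ((ε / 2) ^ M)) :=
      (ENNReal.le_div_iff_mul_le (Or.inl hq0) (Or.inl hqt)).mpr hle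
    rw [ENNReal.mul_div_mul_left _ _ hcA.ne' hcA'.ne,
      ← ENNReal.ofReal_div_of_pos (Real.rpow_pos_of_pos (by positivity) M),
      ← Real.div_rpow (by positivity) (by positivity)] at hcard
    have hratio : (R + ε) / (ε / 2) = (2 * R + 2 * ε) / ε := by
      field_simp
    rw [hratio] at hcard
    rcases Nat.eq_zero_or_pos T.card with h0 | hpos
    · rw [h0]
      push_cast
      positivity
    · exact (ENNReal.natCast_le_ofReal hpos.ne').mp hcard
  set 𝒮 : Set ℕ := {n | ∃ T : Finset G, ↑T ⊆ Metric.ball x R ∧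
    (∀ a ∈ T, ∀ b ∈ T, a ≠ b → ε ≤ dist a b) ∧ T.card = n} with h𝒮
  have h0 : 0 ∈ 𝒮 := ⟨∅, by simp, by simp, rfl⟩
  have hbdd : BddAbove 𝒮 := by
    refine ⟨⌈((2 * R + 2 * ε) / ε) ^ M⌉₊, fun n hn => ?_⟩
    obtain ⟨T, h1, h2, h3⟩ := hn
    have h4 := key T h1 h2
    rw [h3] at h4
    exact_mod_cast h4.trans (Nat.le_ceil _)
  obtain ⟨T, hT1, hT2, hT3⟩ := Nat.sSup_mem ⟨0, h0⟩ hbdd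
  refine ⟨T, hT1, ?_, key T hT1 hT2⟩
  intro z hz
  by_contra hzc
  simp only [mem_iUnion, exists_prop, not_exists, not_and] at hzc
  have hsep : ∀ y ∈ T, ε ≤ dist z y := by
    intro y hy
    by_contra h
    push_neg at h
    exact hzc y hy (mem_ball.mpr h)
  have hzT : z ∉ T := by
    intro h
    have := hsep z h
    simp at this
    linarith
  have hmem : T.card + 1 ∈ 𝒮 := by
    refine ⟨insert z T, ?_, ?_, by rw [Finset.card_insert_of_notMem hzT]⟩
    · rw [Finset.coe_insert]
      exact Set.insert_subset_iff.mpr ⟨hz, hT1⟩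
    · intro a ha b hb hab
      rcases Finset.mem_insert.mp ha with rfl | ha' <;>
        rcases Finset.mem_insert.mp hb with rfl | hb'
      · exact absurd rfl hab
      · exact hsep b hb'
      · rw [dist_comm]; exact hsep a ha'
      · exact hT2 a ha' b hb' hab
  have hle := le_csSup hbdd hmem
  rw [hT3] at hle
  omega

/-- `∫_G [μ(B_{λ³r}(x))/r^{M-αp}]^{q/(p-1)} dx ≤ C ∫_G [W_{α,p}^r μ(x)]^q dx`,
with `C` independent of `r` and `μ`, on an Ahlfors `M`-regular metric measure space
(modelling a Carnot group of homogeneous dimension `M`), `λ = 8`. -/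
theorem stmt_19 (M α p q lam : ℝ) (cA : ℝ≥0∞) (hα : 0 < α) (hp : 1 < p) (hq : p - 1 < q)
    (hM : 0 < M) (hlam : lam = 8) (hcA : 0 < cA) (hcA' : cA < ∞) :
    ∃ C : ℝ≥0∞, 0 < C ∧ C < ∞ ∧
      ∀ (G : Type) (_ : MetricSpace G) (mG : MeasurableSpace G) (_ : BorelSpace G)
        (vol : Measure G)
        (_ : ∀ (x : G) (R : ℝ), 0 < R → vol (Metric.ball x R) = cA * ENNReal.ofReal (R ^ M))
        (r : ℝ) (_ : 0 < r) (μ : Measure G),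
        (∫⁻ x, (μ (Metric.ball x (lam ^ (3 : ℕ) * r)) /
            ENNReal.ofReal (r ^ (M - α * p))) ^ (q / (p - 1)) ∂vol) ≤
          C * ∫⁻ x, (wolffPot μ α p M r x) ^ q ∂vol := by
  classical
  subst hlam
  have hp1 : (0:ℝ) < p - 1 := by linarith
  have hq0 : (0:ℝ) < q := lt_trans hp1 hq
  set s : ℝ := q / (p - 1) with hsdef
  have hs0 : 0 < s := div_pos hq0 hp1
  set K₀ : ℝ := max 1 ((2:ℝ) ^ (α * p - M)) with hK₀def
  have hK₀1 : (1:ℝ) ≤ K₀ := le_max_left _ _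
  have hK₀0 : (0:ℝ) < K₀ := lt_of_lt_of_le one_pos hK₀1
  set CA : ℝ≥0∞ := (ENNReal.ofReal (1/2))⁻¹ ^ q * ENNReal.ofReal K₀ ^ s with hCAdef
  set N : ℝ≥0∞ := ENNReal.ofReal ((4098:ℝ) ^ M) with hNdef
  set C : ℝ≥0∞ := N ^ s * ENNReal.ofReal ((2052:ℝ) ^ M) * CA with hCdef
  have hc2pos : (0:ℝ≥0∞) < ENNReal.ofReal (1/2) := ENNReal.ofReal_pos.mpr (by norm_num)
  have hc2ne : ENNReal.ofReal (1/2 : ℝ) ≠ 0 := hc2pos.ne'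
  have hc2t : ENNReal.ofReal (1/2 : ℝ) ≠ ∞ := ENNReal.ofReal_ne_top
  have hCA0 : 0 < CA := by
    apply ENNReal.mul_pos
    · exact (ENNReal.rpow_pos_of_nonneg (ENNReal.inv_pos.mpr hc2t) hq0.le).ne'
    · exact (ENNReal.rpow_pos_of_nonneg (ENNReal.ofReal_pos.mpr hK₀0) hs0.le).ne'
  have hCAt : CA ≠ ∞ := by
    apply ENNReal.mul_ne_top
    · exact ENNReal.rpow_ne_top_of_nonneg hq0.le (ENNReal.inv_ne_top.mpr hc2ne)
    · exact ENNReal.rpow_ne_top_of_nonneg hs0.le ENNReal.ofReal_ne_top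
  have hN0 : N ≠ 0 := (ENNReal.ofReal_pos.mpr (Real.rpow_pos_of_pos (by norm_num) M)).ne'
  have hNt : N ≠ ∞ := ENNReal.ofReal_ne_top
  have h2052 : (0:ℝ≥0∞) < ENNReal.ofReal ((2052:ℝ) ^ M) :=
    ENNReal.ofReal_pos.mpr (Real.rpow_pos_of_pos (by norm_num) M)
  refine ⟨C, ?_, ?_, ?_⟩
  · apply ENNReal.mul_pos
    · exact (ENNReal.mul_pos (ENNReal.rpow_pos_of_nonneg (hN0.bot_lt) hs0.le).ne' h2052.ne').ne'
    · exact hCA0.ne'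
  · rw [hCdef]
    apply ENNReal.mul_lt_top
    · exact ENNReal.mul_lt_top
        (ENNReal.rpow_lt_top_of_nonneg hs0.le hNt) ENNReal.ofReal_lt_top
    · exact hCAt.lt_top
  intro G instG mG instB vol hvol r hr μ
  rcases isEmpty_or_nonempty G with hGe | ⟨⟨x₀⟩⟩
  · have hv0 : vol = 0 := Subsingleton.elim _ _
    rw [hv0]
    simp
  -- separability and σ-finiteness
  have hnet : ∀ (x : G) (R ε : ℝ), 0 < R → 0 < ε →
      ∃ T : Finset G, ↑T ⊆ Metric.ball x R ∧
        Metric.ball x R ⊆ ⋃ y ∈ T, Metric.ball y ε ∧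
        (T.card : ℝ) ≤ ((2 * R + 2 * ε) / ε) ^ M :=
    fun x R ε hR hε => aux_net vol hcA hcA' hvol x hR hε
  have hnn : ∀ n m : ℕ, ∃ T : Finset G, Metric.ball x₀ ((n:ℝ)+1) ⊆
      ⋃ y ∈ T, Metric.ball y (1/((m:ℝ)+1)) := by
    intro n m
    obtain ⟨T, _, h2, _⟩ := hnet x₀ ((n:ℝ)+1) (1/((m:ℝ)+1)) (by positivity) (by positivity)
    exact ⟨T, h2⟩
  choose F hF using hnn
  haveI : TopologicalSpace.SeparableSpace G := by
    refine ⟨⟨⋃ (n : ℕ) (m : ℕ), ↑(F n m), ?_, ?_⟩⟩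
    · exact Set.countable_iUnion fun n => Set.countable_iUnion fun m =>
        (Finset.countable_toSet _)
    · rw [Metric.dense_iff]
      intro y δ hδ
      obtain ⟨n, hn⟩ := exists_nat_gt (dist y x₀)
      obtain ⟨m, hm⟩ := exists_nat_one_div_lt hδ
      have hy : y ∈ Metric.ball x₀ ((n:ℝ)+1) := by
        rw [Metric.mem_ball]; push_cast; linarith
      have := hF n m hy
      simp only [Set.mem_iUnion, exists_prop] at this
      obtain ⟨t, htT, hyt⟩ := this
      refine ⟨t, ?_, ?_⟩
      · rw [Metric.mem_ball, dist_comm]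
        rw [Metric.mem_ball] at hyt
        exact lt_trans hyt hm
      · exact Set.mem_iUnion.mpr ⟨n, Set.mem_iUnion.mpr ⟨m, htT⟩⟩
  haveI : SecondCountableTopology G := UniformSpace.secondCountable_of_separable G
  haveI : SigmaFinite vol := by
    refine ⟨⟨⟨fun n => Metric.ball x₀ ((n:ℝ)+1), fun _ => trivial, fun n => ?_, ?_⟩⟩⟩
    · rw [hvol x₀ ((n:ℝ)+1) (by positivity)]
      exact ENNReal.mul_lt_top hcA' ENNReal.ofReal_lt_top
    · refine Set.eq_univ_of_forall fun y => ?_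
      obtain ⟨n, hn⟩ := exists_nat_gt (dist y x₀)
      exact Set.mem_iUnion.mpr ⟨n, Metric.mem_ball.mpr (by linarith)⟩
  have hmb : Measurable fun z => μ (Metric.ball z (r/2)) := aux_measurable_ball μ (r/2)
  have hre0 : (0:ℝ) < r ^ (M - α * p) := Real.rpow_pos_of_pos hr _
  have hrene : ENNReal.ofReal (r ^ (M - α * p)) ≠ 0 := (ENNReal.ofReal_pos.mpr hre0).ne'
  have hret : ENNReal.ofReal (r ^ (M - α * p)) ≠ ∞ := ENNReal.ofReal_ne_top
  -- Claim A
  have claimA : ∀ x : G,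
      (μ (Metric.ball x (r/2)) / ENNReal.ofReal (r ^ (M - α * p))) ^ s
        ≤ CA * wolffPot μ α p M r x ^ q := by
    intro x
    have hβ0 : (0:ℝ) < 1 / (p - 1) := by positivity
    set B : ℝ≥0∞ := μ (Metric.ball x (r/2)) / ENNReal.ofReal (K₀ * r ^ (M - α * p)) with hB
    have hstep : ∀ t ∈ Set.Ioo (r/2) r,
        B ^ (1/(p-1)) * ENNReal.ofReal r⁻¹
          ≤ (μ (Metric.ball x t) / ENNReal.ofReal (t ^ (M - α * p))) ^ (1/(p-1)) *
              ENNReal.ofReal t⁻¹ := by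
      rintro t ⟨ht1, ht2⟩
      have ht0 : 0 < t := lt_trans (by positivity) ht1
      have hBle : B ≤ μ (Metric.ball x t) / ENNReal.ofReal (t ^ (M - α * p)) := by
        refine ENNReal.div_le_div (measure_mono (Metric.ball_subset_ball ht1.le)) ?_
        apply ENNReal.ofReal_le_ofReal
        rcases le_or_gt 0 (M - α * p) with he | he
        · calc t ^ (M - α*p) ≤ r ^ (M - α*p) := Real.rpow_le_rpow ht0.le ht2.le he
            _ ≤ K₀ * r ^ (M - α*p) := le_mul_of_one_le_left (Real.rpow_nonneg hr.le _) hK₀1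
        · have h1 : t ^ (M - α*p) ≤ (r/2) ^ (M - α*p) :=
            Real.rpow_le_rpow_of_nonpos (by positivity) ht1.le he.le
          have h2 : (r/2) ^ (M - α*p) = (2:ℝ) ^ (α*p - M) * r ^ (M - α*p) := by
            rw [show r/2 = (2:ℝ)⁻¹ * r from by ring,
              Real.mul_rpow (by norm_num) hr.le,
              Real.inv_rpow (by norm_num), ← Real.rpow_neg (by norm_num), neg_sub]
          calc t ^ (M - α*p) ≤ (r/2) ^ (M - α*p) := h1
            _ = (2:ℝ) ^ (α*p - M) * r ^ (M - α*p) := h2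
            _ ≤ K₀ * r ^ (M - α*p) :=
                mul_le_mul_of_nonneg_right (le_max_right _ _) (Real.rpow_nonneg hr.le _)
      have hinv : ENNReal.ofReal r⁻¹ ≤ ENNReal.ofReal t⁻¹ :=
        ENNReal.ofReal_le_ofReal (inv_anti₀ ht0 ht2.le)
      exact mul_le_mul' (ENNReal.rpow_le_rpow hBle hβ0.le) hinv
    have hwolff : B ^ (1/(p-1)) * ENNReal.ofReal (1/2) ≤ wolffPot μ α p M r x := by
      have h1 : (∫⁻ _ in Set.Ioo (r/2) r,
          B ^ (1/(p-1)) * ENNReal.ofReal r⁻¹ ∂(volume : Measure ℝ))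
            ≤ wolffPot μ α p M r x := by
        rw [wolffPot]
        refine le_trans (lintegral_mono_ae
          ((ae_restrict_iff' measurableSet_Ioo).mpr (ae_of_all _ hstep)))
          (lintegral_mono_set (Set.Ioo_subset_Ioo (by positivity) le_rfl))
      have h2 : (∫⁻ _ in Set.Ioo (r/2) r,
          B ^ (1/(p-1)) * ENNReal.ofReal r⁻¹ ∂(volume : Measure ℝ))
            = B ^ (1/(p-1)) * ENNReal.ofReal (1/2) := by
        rw [setLIntegral_const, Real.volume_Ioo, show r - r/2 = r/2 from by ring,
          mul_assoc, ← ENNReal.ofReal_mul (by positivity)]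
        congr 2
        field_simp
      rw [← h2]
      exact h1
    have hfinal : μ (Metric.ball x (r/2)) / ENNReal.ofReal (r ^ (M - α * p))
        = B * ENNReal.ofReal K₀ := by
      have hK0ne : ENNReal.ofReal K₀ ≠ 0 := (ENNReal.ofReal_pos.mpr hK₀0).ne'
      have hK0t : ENNReal.ofReal K₀ ≠ ∞ := ENNReal.ofReal_ne_top
      have habs : ∀ m a b : ℝ≥0∞, a ≠ 0 → a ≠ ∞ → m / b = m / (a * b) * a := by
        intro m a b ha0 hat
        rw [div_eq_mul_inv, div_eq_mul_inv, ENNReal.mul_inv (Or.inl ha0) (Or.inl hat)]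
        rw [mul_comm a⁻¹ b⁻¹, ← mul_assoc, mul_assoc (m * b⁻¹),
          ENNReal.inv_mul_cancel ha0 hat, mul_one]
      rw [hB, ENNReal.ofReal_mul hK₀0.le]
      exact habs _ _ _ hK0ne hK0t
    have hBs : B ^ s ≤ wolffPot μ α p M r x ^ q * ((ENNReal.ofReal (1/2))⁻¹) ^ q := by
      have hB2 : B ^ (1/(p-1)) ≤ wolffPot μ α p M r x * (ENNReal.ofReal (1/2))⁻¹ := by
        rw [← div_eq_mul_inv]
        exact (ENNReal.le_div_iff_mul_le (Or.inl hc2ne) (Or.inl hc2t)).mpr hwolff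
      calc B ^ s = (B ^ (1/(p-1))) ^ q := by
            rw [← ENNReal.rpow_mul]
            congr 1
            rw [hsdef]; ring
        _ ≤ (wolffPot μ α p M r x * (ENNReal.ofReal (1/2))⁻¹) ^ q :=
            ENNReal.rpow_le_rpow hB2 hq0.le
        _ = wolffPot μ α p M r x ^ q * ((ENNReal.ofReal (1/2))⁻¹) ^ q :=
            ENNReal.mul_rpow_of_nonneg _ _ hq0.le
    calc (μ (Metric.ball x (r/2)) / ENNReal.ofReal (r ^ (M - α * p))) ^ s
        = (B * ENNReal.ofReal K₀) ^ s := by rw [hfinal]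
      _ = B ^ s * ENNReal.ofReal K₀ ^ s := ENNReal.mul_rpow_of_nonneg _ _ hs0.le
      _ ≤ (wolffPot μ α p M r x ^ q * ((ENNReal.ofReal (1/2))⁻¹) ^ q) *
            ENNReal.ofReal K₀ ^ s := mul_le_mul_left hBs _
      _ = CA * wolffPot μ α p M r x ^ q := by rw [hCAdef]; ring
  -- Claim 2: pointwise covering estimate
  have claim2 : ∀ x : G,
      cA * ENNReal.ofReal ((r/4) ^ M) * (μ (Metric.ball x (512*r))) ^ s
        ≤ N ^ s * ∫⁻ z in Metric.ball x (513*r), (μ (Metric.ball z (r/2))) ^ s ∂vol := by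
    intro x
    by_cases hμ0 : μ (Metric.ball x (512*r)) = 0
    · rw [hμ0, ENNReal.zero_rpow_of_pos hs0, mul_zero]
      exact zero_le
    obtain ⟨T, hT1, hT2, hT3⟩ :=
      hnet x (512*r) (r/4) (by positivity) (by positivity)
    have hTne : T.Nonempty := by
      rcases Finset.eq_empty_or_nonempty T with rfl | h
      · exfalso
        apply hμ0
        refine le_antisymm ?_ zero_le
        refine le_trans (measure_mono hT2) ?_
        simp
      · exact h
    obtain ⟨y, hyT, hymax⟩ := T.exists_max_image (fun t => μ (Metric.ball t (r/4))) hTne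
    have hcard : (T.card : ℝ≥0∞) ≤ N := by
      have h1 : (2*(512*r) + 2*(r/4))/(r/4) = (4098:ℝ) := by
        field_simp; ring
      rw [← ENNReal.ofReal_natCast, hNdef]
      apply ENNReal.ofReal_le_ofReal
      rw [← h1]
      exact hT3
    have h1 : μ (Metric.ball x (512*r)) ≤ (T.card : ℝ≥0∞) * μ (Metric.ball y (r/4)) := by
      calc μ (Metric.ball x (512*r)) ≤ μ (⋃ t ∈ T, Metric.ball t (r/4)) := measure_mono hT2
        _ ≤ ∑ t ∈ T, μ (Metric.ball t (r/4)) := measure_biUnion_finset_le _ _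
        _ ≤ T.card • μ (Metric.ball y (r/4)) :=
            Finset.sum_le_card_nsmul _ _ _ fun t ht => hymax t ht
        _ = (T.card : ℝ≥0∞) * μ (Metric.ball y (r/4)) := nsmul_eq_mul _ _
    have h2 : (μ (Metric.ball x (512*r))) ^ s ≤ N ^ s * (μ (Metric.ball y (r/4))) ^ s := by
      calc (μ (Metric.ball x (512*r))) ^ s
          ≤ ((T.card : ℝ≥0∞) * μ (Metric.ball y (r/4))) ^ s :=
            ENNReal.rpow_le_rpow h1 hs0.le
        _ = (T.card : ℝ≥0∞) ^ s * (μ (Metric.ball y (r/4))) ^ s :=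
            ENNReal.mul_rpow_of_nonneg _ _ hs0.le
        _ ≤ N ^ s * (μ (Metric.ball y (r/4))) ^ s :=
            mul_le_mul_left (ENNReal.rpow_le_rpow hcard hs0.le) _
    have hy_in : Metric.ball y (r/4) ⊆ Metric.ball x (513*r) := by
      have hyx := hT1 hyT
      rw [Metric.mem_ball] at hyx
      apply Metric.ball_subset_ball'
      linarith
    have h3 : (μ (Metric.ball y (r/4))) ^ s * (cA * ENNReal.ofReal ((r/4) ^ M))
        ≤ ∫⁻ z in Metric.ball x (513*r), (μ (Metric.ball z (r/2))) ^ s ∂vol := by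
      calc (μ (Metric.ball y (r/4))) ^ s * (cA * ENNReal.ofReal ((r/4) ^ M))
          = ∫⁻ _ in Metric.ball y (r/4), (μ (Metric.ball y (r/4))) ^ s ∂vol := by
            rw [setLIntegral_const, hvol y (r/4) (by positivity)]
        _ ≤ ∫⁻ z in Metric.ball y (r/4), (μ (Metric.ball z (r/2))) ^ s ∂vol := by
            refine lintegral_mono_ae ((ae_restrict_iff' measurableSet_ball).mpr
              (ae_of_all _ fun z hz => ?_))
            refine ENNReal.rpow_le_rpow (measure_mono ?_) hs0.le
            apply Metric.ball_subset_ball'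
            rw [Metric.mem_ball] at hz
            rw [dist_comm]
            linarith
        _ ≤ ∫⁻ z in Metric.ball x (513*r), (μ (Metric.ball z (r/2))) ^ s ∂vol :=
            lintegral_mono_set hy_in
    calc cA * ENNReal.ofReal ((r/4) ^ M) * (μ (Metric.ball x (512*r))) ^ s
        ≤ cA * ENNReal.ofReal ((r/4) ^ M) * (N ^ s * (μ (Metric.ball y (r/4))) ^ s) :=
          mul_le_mul_right h2 _
      _ = N ^ s * ((μ (Metric.ball y (r/4))) ^ s * (cA * ENNReal.ofReal ((r/4) ^ M))) := by
          ring
      _ ≤ N ^ s * ∫⁻ z in Metric.ball x (513*r), (μ (Metric.ball z (r/2))) ^ s ∂vol :=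
          mul_le_mul_right h3 _
  -- Claim 3: integrated estimate via Tonelli
  have hNst : N ^ s ≠ ∞ := ENNReal.rpow_ne_top_of_nonneg hs0.le hNt
  have claim3 : ∫⁻ x, (μ (Metric.ball x (512*r))) ^ s ∂vol
      ≤ N ^ s * ENNReal.ofReal ((2052:ℝ) ^ M) *
          ∫⁻ z, (μ (Metric.ball z (r/2))) ^ s ∂vol := by
    set g : G → ℝ≥0∞ := fun z => (μ (Metric.ball z (r/2))) ^ s with hgdef
    have hgm : Measurable g := hmb.pow_const s
    set f : G → G → ℝ≥0∞ := fun x z =>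
      Set.indicator {p : G × G | dist p.2 p.1 < 513*r} (fun p => g p.2) (x, z) with hfdef
    have hS : MeasurableSet {p : G × G | dist p.2 p.1 < 513*r} := by
      have : Measurable fun p : G × G => dist p.2 p.1 := measurable_snd.dist measurable_fst
      exact this measurableSet_Iio
    have hfm : AEMeasurable (Function.uncurry f) (vol.prod vol) :=
      ((hgm.comp measurable_snd).indicator hS).aemeasurable
    have hswap := lintegral_lintegral_swap (μ := vol) (ν := vol) hfm
    have hinner1 : ∀ x, (∫⁻ z in Metric.ball x (513*r), g z ∂vol) = ∫⁻ z, f x z ∂vol := by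
      intro x
      rw [← lintegral_indicator measurableSet_ball]
      refine lintegral_congr fun z => ?_
      simp only [hfdef]
      rw [Set.indicator_apply, Set.indicator_apply]
      simp only [Set.mem_setOf_eq, Metric.mem_ball]
    have hinner2 : ∀ z, (∫⁻ x, f x z ∂vol) = g z * (cA * ENNReal.ofReal ((513*r) ^ M)) := by
      intro z
      have hfz : ∀ x, f x z = Set.indicator (Metric.ball z (513*r)) (fun _ => g z) x := by
        intro x
        simp only [hfdef]
        rw [Set.indicator_apply, Set.indicator_apply]
        simp only [Set.mem_setOf_eq, Metric.mem_ball]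
        rw [dist_comm]
      simp_rw [hfz]
      rw [lintegral_indicator_const measurableSet_ball, hvol z (513*r) (by positivity)]
    have hconst_ne : cA * ENNReal.ofReal ((r/4) ^ M) ≠ ∞ :=
      ENNReal.mul_ne_top hcA'.ne ENNReal.ofReal_ne_top
    have hstep : cA * ENNReal.ofReal ((r/4) ^ M) * ∫⁻ x, (μ (Metric.ball x (512*r))) ^ s ∂vol
        ≤ N ^ s * (cA * ENNReal.ofReal ((513*r) ^ M)) * ∫⁻ z, g z ∂vol := by
      calc cA * ENNReal.ofReal ((r/4) ^ M) * ∫⁻ x, (μ (Metric.ball x (512*r))) ^ s ∂vol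
          = ∫⁻ x, cA * ENNReal.ofReal ((r/4) ^ M) * (μ (Metric.ball x (512*r))) ^ s ∂vol :=
            (lintegral_const_mul' _ _ hconst_ne).symm
        _ ≤ ∫⁻ x, N ^ s * ∫⁻ z in Metric.ball x (513*r), g z ∂vol ∂vol :=
            lintegral_mono claim2
        _ = N ^ s * ∫⁻ x, ∫⁻ z, f x z ∂vol ∂vol := by
            rw [lintegral_const_mul' _ _ hNst]
            congr 1
            exact lintegral_congr hinner1
        _ = N ^ s * ∫⁻ z, ∫⁻ x, f x z ∂vol ∂vol := by rw [hswap]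
        _ = N ^ s * ∫⁻ z, g z * (cA * ENNReal.ofReal ((513*r) ^ M)) ∂vol := by
            congr 1
            exact lintegral_congr hinner2
        _ = N ^ s * (cA * ENNReal.ofReal ((513*r) ^ M)) * ∫⁻ z, g z ∂vol := by
            rw [lintegral_mul_const'' _ hgm.aemeasurable]
            ring
    have hcc0 : cA * ENNReal.ofReal ((r/4) ^ M) ≠ 0 :=
      mul_ne_zero hcA.ne' (ENNReal.ofReal_pos.mpr (Real.rpow_pos_of_pos (by positivity) M)).ne'
    have hkey : N ^ s * (cA * ENNReal.ofReal ((513*r) ^ M)) * ∫⁻ z, g z ∂vol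
        = cA * ENNReal.ofReal ((r/4) ^ M) *
            (N ^ s * ENNReal.ofReal ((2052:ℝ) ^ M) * ∫⁻ z, g z ∂vol) := by
      have h513 : ENNReal.ofReal ((513*r) ^ M)
          = ENNReal.ofReal ((r/4) ^ M) * ENNReal.ofReal ((2052:ℝ) ^ M) := by
        rw [← ENNReal.ofReal_mul (by positivity), ← Real.mul_rpow (by positivity) (by norm_num)]
        congr 2
        ring
      rw [h513]; ring
    rw [hkey] at hstep
    exact (ENNReal.mul_le_mul_iff_right hcc0 hconst_ne).mp hstep
  -- Final assembly
  have h83 : ((8:ℝ) ^ (3:ℕ)) * r = 512 * r := by norm_num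
  simp only [h83]
  set D : ℝ≥0∞ := ((ENNReal.ofReal (r ^ (M - α * p))) ^ s)⁻¹ with hDdef
  have hDne : D ≠ ∞ := by
    rw [hDdef, ENNReal.inv_ne_top]
    exact (ENNReal.rpow_pos_of_nonneg (ENNReal.ofReal_pos.mpr hre0) hs0.le).ne'
  calc ∫⁻ x, (μ (Metric.ball x (512*r)) / ENNReal.ofReal (r ^ (M - α * p))) ^ s ∂vol
      = ∫⁻ x, D * (μ (Metric.ball x (512*r))) ^ s ∂vol := by
        refine lintegral_congr fun x => ?_
        rw [hDdef, ENNReal.div_rpow_of_nonneg _ _ hs0.le, ENNReal.div_eq_inv_mul]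
    _ = D * ∫⁻ x, (μ (Metric.ball x (512*r))) ^ s ∂vol := lintegral_const_mul' _ _ hDne
    _ ≤ D * (N ^ s * ENNReal.ofReal ((2052:ℝ) ^ M) *
          ∫⁻ z, (μ (Metric.ball z (r/2))) ^ s ∂vol) := mul_le_mul_right claim3 _
    _ = N ^ s * ENNReal.ofReal ((2052:ℝ) ^ M) *
          ∫⁻ z, D * (μ (Metric.ball z (r/2))) ^ s ∂vol := by
        rw [lintegral_const_mul' _ _ hDne]; ring
    _ = N ^ s * ENNReal.ofReal ((2052:ℝ) ^ M) *
          ∫⁻ z, (μ (Metric.ball z (r/2)) / ENNReal.ofReal (r ^ (M - α * p))) ^ s ∂vol := by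
        congr 1
        refine lintegral_congr fun z => ?_
        rw [hDdef, ENNReal.div_rpow_of_nonneg _ _ hs0.le, ENNReal.div_eq_inv_mul]
    _ ≤ N ^ s * ENNReal.ofReal ((2052:ℝ) ^ M) *
          ∫⁻ z, CA * wolffPot μ α p M r z ^ q ∂vol :=
        mul_le_mul_right (lintegral_mono claimA) _
    _ = C * ∫⁻ x, wolffPot μ α p M r x ^ q ∂vol := by
        rw [lintegral_const_mul' _ _ hCAt, hCdef]; ring
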